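/- arXiv:1809.06898 — 2 statements merged into one kernel-verified Lean document; each statement's English description precedes it below -/
import Mathlib

section
/- The Q_2-Margolis homology of B₂ is T_2(ζ_1, ζ_2, …): the subspace of B₂ spanned by monomials ζ_1^{e_1} ζ_2^{e_2} ⋯ ζ_r^{e_r} in which e_k < p² for every k ≥ 1 lies in ker(Q_2), meets im(Q_2) only in 0, and maps isomorphically onto ker(Q_2)/im(Q_2). -/
/-- A monomial of `B n = F_p[ζ₁, ζ₂, …] ⊗ Λ(τ̄_{n+1}, τ̄_{n+2}, …)`:
`e k` is the exponent of `ζ_k` (with `e 0 = 0`, i.e. no `ζ₀`), and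
`t` is the set of indices `m` of the exterior generators `τ̄_m` occurring
(all of which satisfy `m ≥ n + 1`). -/
structure Mono (n : ℕ) where
  e : ℕ →₀ ℕ
  t : Finset ℕ
  he : e 0 = 0
  ht : ∀ m ∈ t, n + 1 ≤ m

/-- `B p n` models `A//E(n)_* = F_p[ζ₁, ζ₂, …] ⊗ Λ(τ̄_{n+1}, …)` as the free
`F_p`-vector space on its monomial basis. -/
abbrev B (p n : ℕ) : Type := Mono n →₀ ZMod p

namespace Mono

variable {n : ℕ}

/-- Internal (topological) degree of a monomial: `deg ζ_k = 2(p^k − 1)`,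
`deg τ̄_m = 2p^m − 1`. -/
def deg (p : ℕ) (x : Mono n) : ℕ :=
  x.e.sum (fun k a => a * (2 * (p ^ k - 1))) + ∑ m ∈ x.t, (2 * p ^ m - 1)

/-- Weight of a monomial: `wt ζ_k = wt τ̄_k = p^k`, extended additively. -/
def wt (p : ℕ) (x : Mono n) : ℕ :=
  x.e.sum (fun k a => a * p ^ k) + ∑ m ∈ x.t, p ^ m

/-- Length of a monomial: the number of exterior factors `τ̄_m` occurring in it. -/
def len (x : Mono n) : ℕ := x.t.card

end Mono

/-- The monomial obtained from `x` by the Milnor operation `Q_r` acting on the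
exterior factor `τ̄_m`: remove `τ̄_m` and multiply by `ζ_{m−r}^{p^r}`
(with the convention `ζ₀ = 1`, i.e. if `m ≤ r` nothing is added). -/
noncomputable def Qtarget (p r : ℕ) {n : ℕ} (x : Mono n) (m : ℕ) : Mono n where
  e := if r < m then x.e + Finsupp.single (m - r) (p ^ r) else x.e
  t := x.t.erase m
  he := by
    by_cases h : r < m
    · simp [if_pos h, Finsupp.single_apply, x.he, Nat.sub_ne_zero_of_lt h]
    · simp [if_neg h, x.he]
  ht := fun m' hm' => x.ht m' (Finset.mem_of_mem_erase hm')

/-- Value of the Milnor operation `Q_r` on a basis monomial: the signed sum over the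
exterior factors `τ̄_m` of `x`, the sign being the Koszul sign `(−1)^{#{m' ∈ t, m' < m}}`. -/
noncomputable def Qmono (p r : ℕ) {n : ℕ} (x : Mono n) : B p n :=
  ∑ m ∈ x.t, ((-1 : ZMod p) ^ ((x.t.filter (fun m' => m' < m)).card)) •
    Finsupp.single (Qtarget p r x m) (1 : ZMod p)

/-- The Milnor operation `Q_r : B_n → B_n`, the unique graded derivation with
`Q_r ζ_k = 0` and `Q_r τ̄_m = ζ_{m−r}^{p^r}`. -/
noncomputable def Qop (p n r : ℕ) : B p n →ₗ[ZMod p] B p n :=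
  Finsupp.lsum (ZMod p) fun x => LinearMap.toSpanSingleton (ZMod p) (B p n) (Qmono p r x)

/-- The span of the set of monomials satisfying a predicate `P`. -/
noncomputable def monSpan (p n : ℕ) (P : Mono n → Prop) : Submodule (ZMod p) (B p n) :=
  Submodule.span (ZMod p) ((fun x => Finsupp.single x (1 : ZMod p)) '' {x | P x})


section Aux
open Classical

variable {p : ℕ}

lemma Mono.ext' {n : ℕ} {x y : Mono n} (he : x.e = y.e) (ht : x.t = y.t) : x = y := by
  cases x; cases y; simp_all

lemma mem_t_lt {x : Mono 2} {m : ℕ} (hm : m ∈ x.t) : 2 < m := x.ht m hm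

lemma Qtarget_e (p : ℕ) (x : Mono 2) {m : ℕ} (hm : 2 < m) :
    (Qtarget p 2 x m).e = x.e + Finsupp.single (m - 2) (p ^ 2) := by
  simp [Qtarget, if_pos hm]

lemma Qtarget_t (p : ℕ) (x : Mono 2) (m : ℕ) :
    (Qtarget p 2 x m).t = x.t.erase m := rfl

/-- position `j` is "bad" (non-reduced) -/
def Bad (p : ℕ) (x : Mono 2) (j : ℕ) : Prop :=
  1 ≤ j ∧ (p ^ 2 ≤ x.e j ∨ j + 2 ∈ x.t)

/-- the monomial `ζ_j^{-p²} τ̄_{j+2} ⋅ x` produced by the contracting homotopy -/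
noncomputable def Htarget (p : ℕ) (x : Mono 2) (j : ℕ) (hj : 1 ≤ j) : Mono 2 where
  e := x.e - Finsupp.single j (p ^ 2)
  t := insert (j + 2) x.t
  he := by simp [Finsupp.tsub_apply, x.he]
  ht := by
    intro m hm
    rcases Finset.mem_insert.mp hm with h | h
    · omega
    · exact x.ht m h

lemma Htarget_e (p : ℕ) (x : Mono 2) (j : ℕ) (hj : 1 ≤ j) :
    (Htarget p x j hj).e = x.e - Finsupp.single j (p ^ 2) := rfl

lemma Htarget_t (p : ℕ) (x : Mono 2) (j : ℕ) (hj : 1 ≤ j) :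
    (Htarget p x j hj).t = insert (j + 2) x.t := rfl

open Classical in
/-- the contracting homotopy on basis monomials -/
noncomputable def Hmono (p : ℕ) (x : Mono 2) : B p 2 :=
  if h : ∃ j, Bad p x j then
    if Nat.find h + 2 ∈ x.t then 0
    else Finsupp.single (Htarget p x (Nat.find h) (Nat.find_spec h).1) 1
  else 0

noncomputable def Hop (p : ℕ) : B p 2 →ₗ[ZMod p] B p 2 :=
  Finsupp.lsum (ZMod p) fun x => LinearMap.toSpanSingleton (ZMod p) (B p 2) (Hmono p x)

open Classical in
noncomputable def Pop (p : ℕ) : B p 2 →ₗ[ZMod p] B p 2 :=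
  Finsupp.lsum (ZMod p) fun x =>
    if x.t = ∅ ∧ ∀ k, 1 ≤ k → x.e k < p ^ 2 then
      LinearMap.toSpanSingleton (ZMod p) (B p 2) (Finsupp.single x 1)
    else 0

lemma Qop_single (p : ℕ) (x : Mono 2) :
    Qop p 2 2 (Finsupp.single x 1) = Qmono p 2 x := by
  simp [Qop, Finsupp.lsum_single, LinearMap.toSpanSingleton_apply]

lemma Hop_single (p : ℕ) (x : Mono 2) :
    Hop p (Finsupp.single x 1) = Hmono p x := by
  simp [Hop, Finsupp.lsum_single, LinearMap.toSpanSingleton_apply]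

lemma Pop_single (p : ℕ) (x : Mono 2) :
    Pop p (Finsupp.single x 1) =
      if x.t = ∅ ∧ ∀ k, 1 ≤ k → x.e k < p ^ 2 then Finsupp.single x 1 else 0 := by
  classical
  rw [Pop, Finsupp.lsum_single]
  split_ifs with h <;> simp [LinearMap.toSpanSingleton_apply]

lemma Hmono_eq_zero_of_red (p : ℕ) {x : Mono 2}
    (hred : x.t = ∅ ∧ ∀ k, 1 ≤ k → x.e k < p ^ 2) : Hmono p x = 0 := by
  classical
  rw [Hmono, dif_neg]
  rintro ⟨j, hj1, hj2⟩
  rcases hj2 with h | h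
  · exact absurd h (by have := hred.2 j hj1; omega)
  · rw [hred.1] at h; exact absurd h (Finset.notMem_empty _)

lemma Hmono_eq_zero_of_mem (p : ℕ) {x : Mono 2} {j : ℕ}
    (hbad : Bad p x j) (hmin : ∀ i < j, ¬ Bad p x i) (hmem : j + 2 ∈ x.t) :
    Hmono p x = 0 := by
  classical
  have h : ∃ i, Bad p x i := ⟨j, hbad⟩
  have hfind : Nat.find h = j := (Nat.find_eq_iff h).mpr ⟨hbad, hmin⟩
  rw [Hmono, dif_pos h, if_pos (show Nat.find h + 2 ∈ x.t by rw [hfind]; exact hmem)]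

lemma Hmono_eq_of (p : ℕ) {x : Mono 2} {j : ℕ}
    (hbad : Bad p x j) (hmin : ∀ i < j, ¬ Bad p x i) (hmem : j + 2 ∉ x.t) :
    Hmono p x = Finsupp.single (Htarget p x j hbad.1) 1 := by
  classical
  have h : ∃ i, Bad p x i := ⟨j, hbad⟩
  have hfind : Nat.find h = j := (Nat.find_eq_iff h).mpr ⟨hbad, hmin⟩
  subst hfind
  rw [Hmono, dif_pos h, if_neg hmem]

end Aux

section Key

lemma keyId (p : ℕ) (x : Mono 2) :
    Finsupp.single x (1 : ZMod p) =
      Pop p (Finsupp.single x 1) + Qop p 2 2 (Hop p (Finsupp.single x 1))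
        + Hop p (Qop p 2 2 (Finsupp.single x 1)) := by
  classical
  rw [Qop_single, Hop_single, Pop_single]
  by_cases hred : x.t = ∅ ∧ ∀ k, 1 ≤ k → x.e k < p ^ 2
  · rw [if_pos hred, Hmono_eq_zero_of_red p hred, Qmono, hred.1]
    simp
  · rw [if_neg hred]
    have hex : ∃ j, Bad p x j := by
      by_contra hne
      push_neg at hne
      apply hred
      constructor
      · by_contra hne2
        obtain ⟨m, hm⟩ := Finset.nonempty_iff_ne_empty.mpr hne2
        have h3 := x.ht m hm
        refine absurd ⟨(by omega : 1 ≤ m - 2), Or.inr ?_⟩ (hne (m - 2))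
        have hm2 : m - 2 + 2 = m := by omega
        rw [hm2]; exact hm
      · intro k hk
        by_contra hge
        exact hne k ⟨hk, Or.inl (by omega)⟩
    set j := Nat.find hex with hjdef
    have hbad : Bad p x j := Nat.find_spec hex
    have hmin : ∀ i < j, ¬ Bad p x i := fun i hi => Nat.find_min hex hi
    have hj1 : 1 ≤ j := hbad.1
    have hL1 : ∀ m ∈ x.t, j + 2 ≤ m := by
      intro m hm
      have h3 := x.ht m hm
      by_contra hlt
      refine hmin (m - 2) (by omega) ⟨by omega, Or.inr ?_⟩
      have hm2 : m - 2 + 2 = m := by omega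
      rw [hm2]; exact hm
    have hfilt : x.t.filter (fun m' => m' < j + 2) = ∅ := by
      rw [Finset.filter_eq_empty_iff]
      intro m hm
      have := hL1 m hm
      omega
    by_cases hmem : j + 2 ∈ x.t
    · -- Case B1 : τ̄_{j+2} occurs in x
      rw [Hmono_eq_zero_of_mem p hbad hmin hmem]
      simp only [map_zero, add_zero, zero_add]
      rw [Qmono, map_sum]
      have hside : ∀ m ∈ x.t, m ≠ j + 2 →
          Hop p ((-1 : ZMod p) ^ ((x.t.filter (fun m' => m' < m)).card) •
            Finsupp.single (Qtarget p 2 x m) (1 : ZMod p)) = 0 := by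
        intro m hm hne
        have hgt : j + 2 < m := lt_of_le_of_ne (hL1 m hm) (Ne.symm hne)
        have h3 : 2 < m := by omega
        have hz : Hmono p (Qtarget p 2 x m) = 0 := by
          refine Hmono_eq_zero_of_mem p (j := j) ⟨hj1, Or.inr ?_⟩ ?_ ?_
          · rw [Qtarget_t]
            exact Finset.mem_erase.mpr ⟨by omega, hmem⟩
          · intro i hi hBi
            refine hmin i hi ⟨hBi.1, ?_⟩
            rcases hBi.2 with hc | hc
            · left
              rw [Qtarget_e p x h3, Finsupp.add_apply,
                Finsupp.single_apply, if_neg (by omega : ¬ m - 2 = i)] at hc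
              simpa using hc
            · right
              rw [Qtarget_t] at hc
              exact Finset.mem_of_mem_erase hc
          · rw [Qtarget_t]
            exact Finset.mem_erase.mpr ⟨by omega, hmem⟩
        rw [map_smul, Hop_single, hz, smul_zero]
      rw [Finset.sum_eq_single_of_mem (j + 2) hmem hside]
      rw [map_smul, Hop_single]
      have h3 : 2 < j + 2 := by omega
      have hy : Hmono p (Qtarget p 2 x (j + 2)) = Finsupp.single x 1 := by
        have hyE : (Qtarget p 2 x (j + 2)).e = x.e + Finsupp.single j (p ^ 2) := by
          rw [Qtarget_e p x h3]
          norm_num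
        have hbady : Bad p (Qtarget p 2 x (j + 2)) j := by
          refine ⟨hj1, Or.inl ?_⟩
          rw [hyE, Finsupp.add_apply, Finsupp.single_eq_same]
          omega
        have hminy : ∀ i < j, ¬ Bad p (Qtarget p 2 x (j + 2)) i := by
          intro i hi hBi
          refine hmin i hi ⟨hBi.1, ?_⟩
          rcases hBi.2 with hc | hc
          · left
            rw [hyE, Finsupp.add_apply, Finsupp.single_apply,
              if_neg (by omega : ¬ j = i)] at hc
            simpa using hc
          · right
            rw [Qtarget_t] at hc
            exact Finset.mem_of_mem_erase hc
        have hmemy : j + 2 ∉ (Qtarget p 2 x (j + 2)).t := by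
          rw [Qtarget_t]
          exact Finset.notMem_erase _ _
        rw [Hmono_eq_of p hbady hminy hmemy]
        congr 1
        apply Mono.ext'
        · rw [Htarget_e, hyE, add_tsub_cancel_right]
        · rw [Htarget_t, Qtarget_t]
          exact Finset.insert_erase hmem
      rw [hy, hfilt]
      simp
    · -- Case B2 : e_j ≥ p², no τ̄_{j+2}
      have hq : p ^ 2 ≤ x.e j := by
        rcases hbad.2 with h | h
        · exact h
        · exact absurd h hmem
      rw [Hmono_eq_of p hbad hmin hmem]
      set z := Htarget p x j hj1 with hzdef
      have hzt : z.t = insert (j + 2) x.t := rfl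
      have hze : z.e = x.e - Finsupp.single j (p ^ 2) := rfl
      rw [Qop_single, Qmono, hzt, Finset.sum_insert hmem]
      -- main term
      have hfilt' : (insert (j + 2) x.t).filter (fun m' => m' < j + 2) = ∅ := by
        rw [Finset.filter_insert, if_neg (by omega), hfilt]
      have hmain : Qtarget p 2 z (j + 2) = x := by
        apply Mono.ext'
        · rw [Qtarget_e p z (by omega), hze]
          ext k
          simp only [Finsupp.add_apply, Finsupp.tsub_apply, Finsupp.single_apply]
          have h22 : j + 2 - 2 = j := by omega
          rw [h22]
          split_ifs with h
          · subst h; omega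
          · omega
        · rw [Qtarget_t, hzt, Finset.erase_insert hmem]
      -- cancelling terms
      rw [Qmono, map_sum]
      have hcancel : ∀ m ∈ x.t,
          (-1 : ZMod p) ^ (((insert (j + 2) x.t).filter (fun m' => m' < m)).card) •
              Finsupp.single (Qtarget p 2 z m) (1 : ZMod p)
            = - (Hop p ((-1 : ZMod p) ^ ((x.t.filter (fun m' => m' < m)).card) •
                Finsupp.single (Qtarget p 2 x m) (1 : ZMod p))) := by
        intro m hm
        have hgt : j + 2 < m := lt_of_le_of_ne (hL1 m hm) (fun h => hmem (h ▸ hm))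
        have h3 : 2 < m := by omega
        have hbady : Bad p (Qtarget p 2 x m) j := by
          refine ⟨hj1, Or.inl ?_⟩
          rw [Qtarget_e p x h3, Finsupp.add_apply, Finsupp.single_apply,
            if_neg (by omega : ¬ m - 2 = j)]
          omega
        have hminy : ∀ i < j, ¬ Bad p (Qtarget p 2 x m) i := by
          intro i hi hBi
          refine hmin i hi ⟨hBi.1, ?_⟩
          rcases hBi.2 with hc | hc
          · left
            rw [Qtarget_e p x h3, Finsupp.add_apply, Finsupp.single_apply,
              if_neg (by omega : ¬ m - 2 = i)] at hc
            simpa using hc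
          · right
            rw [Qtarget_t] at hc
            exact Finset.mem_of_mem_erase hc
        have hmemy : j + 2 ∉ (Qtarget p 2 x m).t := by
          rw [Qtarget_t]
          intro hc
          exact hmem (Finset.mem_of_mem_erase hc)
        rw [map_smul, Hop_single, Hmono_eq_of p hbady hminy hmemy]
        have htgt : Qtarget p 2 z m = Htarget p (Qtarget p 2 x m) j hj1 := by
          apply Mono.ext'
          · rw [Htarget_e, Qtarget_e p z h3, Qtarget_e p x h3, hze]
            ext k
            simp only [Finsupp.add_apply, Finsupp.tsub_apply, Finsupp.single_apply]
            by_cases h1 : j = k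
            · subst h1
              rw [if_neg (by omega : ¬ m - 2 = j)]
              omega
            · rw [if_neg h1]
              omega
          · rw [Htarget_t, Qtarget_t, Qtarget_t, hzt]
            exact Finset.erase_insert_of_ne (by omega)
        have hsign : ((insert (j + 2) x.t).filter (fun m' => m' < m)).card
            = (x.t.filter (fun m' => m' < m)).card + 1 := by
          rw [Finset.filter_insert, if_pos hgt, Finset.card_insert_of_notMem]
          intro hc
          exact hmem (Finset.mem_of_mem_filter _ hc)
        rw [htgt, hsign, pow_succ, mul_neg_one, neg_smul]
      rw [Finset.sum_congr rfl hcancel, Finset.sum_neg_distrib, hfilt', hmain]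
      simp only [Finset.card_empty, pow_zero, one_smul, zero_add]
      abel

end Key

section Final

lemma decompose (p : ℕ) (v : B p 2) :
    v = Pop p v + Qop p 2 2 (Hop p v) + Hop p (Qop p 2 2 v) := by
  have heq : (LinearMap.id : B p 2 →ₗ[ZMod p] B p 2)
      = Pop p + (Qop p 2 2).comp (Hop p) + (Hop p).comp (Qop p 2 2) := by
    apply Finsupp.lhom_ext
    intro a b
    have hb : (Finsupp.single a b : B p 2) = b • Finsupp.single a 1 := by
      rw [Finsupp.smul_single', mul_one]
    simp only [LinearMap.id_coe, id_eq, LinearMap.add_apply, LinearMap.comp_apply]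
    rw [hb, map_smul, map_smul, map_smul, map_smul, map_smul, ← smul_add, ← smul_add]
    exact congrArg (b • ·) (keyId p a)
  calc v = LinearMap.id (R := ZMod p) v := rfl
    _ = _ := by rw [heq]; simp only [LinearMap.add_apply, LinearMap.comp_apply]

lemma Pop_mem (p : ℕ) (v : B p 2) :
    Pop p v ∈ monSpan p 2 (fun x => x.t = ∅ ∧ ∀ k, 1 ≤ k → x.e k < p ^ 2) := by
  classical
  induction v using Finsupp.induction_linear with
  | zero => rw [map_zero]; exact zero_mem _
  | add f g hf hg => rw [map_add]; exact add_mem hf hg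
  | single a b =>
    rw [Pop, Finsupp.lsum_single]
    split_ifs with h
    · rw [LinearMap.toSpanSingleton_apply]
      exact Submodule.smul_mem _ _ (Submodule.subset_span ⟨a, h, rfl⟩)
    · exact zero_mem _

lemma Pop_Qmono (p : ℕ) (x : Mono 2) : Pop p (Qmono p 2 x) = 0 := by
  classical
  rw [Qmono, map_sum]
  refine Finset.sum_eq_zero fun m hm => ?_
  have h3 : 2 < m := x.ht m hm
  rw [map_smul, Pop_single, if_neg, smul_zero]
  rintro ⟨-, h2⟩
  have := h2 (m - 2) (by omega)
  rw [Qtarget_e p x h3, Finsupp.add_apply, Finsupp.single_eq_same] at this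
  omega

lemma Pop_Q (p : ℕ) (v : B p 2) : Pop p (Qop p 2 2 v) = 0 := by
  have heq : (Pop p).comp (Qop p 2 2) = 0 := by
    apply Finsupp.lhom_ext
    intro a b
    have hb : (Finsupp.single a b : B p 2) = b • Finsupp.single a 1 := by
      rw [Finsupp.smul_single', mul_one]
    simp only [LinearMap.comp_apply, LinearMap.zero_apply]
    rw [hb, map_smul, map_smul, Qop_single, Pop_Qmono, smul_zero]
  exact congrArg (fun f => f v) heq

lemma Pop_fix (p : ℕ) {s : B p 2}
    (hs : s ∈ monSpan p 2 (fun x => x.t = ∅ ∧ ∀ k, 1 ≤ k → x.e k < p ^ 2)) :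
    Pop p s = s := by
  classical
  refine Submodule.span_induction ?_ ?_ ?_ ?_ hs
  · rintro _ ⟨x, hx, rfl⟩
    have hx' : x.t = ∅ ∧ ∀ k, 1 ≤ k → x.e k < p ^ 2 := hx
    rw [Pop_single, if_pos hx']
  · exact map_zero _
  · intro a b _ _ ha hb
    rw [map_add, ha, hb]
  · intro c a _ ha
    rw [map_smul, ha]

end Final

/-- The `Q₂`-Margolis homology of `B₂` is `T₂(ζ₁, ζ₂, …)`:
the subspace spanned by the monomials `ζ₁^{e₁} ζ₂^{e₂} ⋯` with `e_k < p²` for all `k ≥ 1`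
(and no exterior factors) lies in `ker Q₂`, meets `im Q₂` only in `0`, and maps
isomorphically onto `ker Q₂ / im Q₂`. -/
theorem margolis_Q2_of_B2 (p : ℕ) (hp : p.Prime) (hodd : Odd p) :
    monSpan p 2 (fun x => x.t = ∅ ∧ ∀ k, 1 ≤ k → x.e k < p ^ 2) ≤
        LinearMap.ker (Qop p 2 2) ∧
    monSpan p 2 (fun x => x.t = ∅ ∧ ∀ k, 1 ≤ k → x.e k < p ^ 2) ⊓
        LinearMap.range (Qop p 2 2) = ⊥ ∧
    LinearMap.ker (Qop p 2 2) ≤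
      monSpan p 2 (fun x => x.t = ∅ ∧ ∀ k, 1 ≤ k → x.e k < p ^ 2) ⊔
        LinearMap.range (Qop p 2 2) := by
  constructor
  · rw [monSpan, Submodule.span_le]
    rintro _ ⟨x, hx, rfl⟩
    rw [SetLike.mem_coe, LinearMap.mem_ker, Qop_single, Qmono, hx.1]
    simp
  constructor
  · rw [Submodule.eq_bot_iff]
    rintro v ⟨hv1, w, rfl⟩
    rw [← Pop_fix p hv1, Pop_Q]
  · intro v hv
    have hk : Qop p 2 2 v = 0 := LinearMap.mem_ker.mp hv
    have hd := decompose p v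
    rw [hk, map_zero, add_zero] at hd
    rw [hd]
    exact add_mem (Submodule.mem_sup_left (Pop_mem p v))
      (Submodule.mem_sup_right ⟨Hop p v, rfl⟩)
end

section
/- Let R = F_p[ζ_2, ζ_3, …] ⊗ Λ(τ̄_3, τ̄_4, …) ⊆ B₂, which is stable under Q_0 and Q_1. Then the Q_0-Margolis homology of R is F_p[ζ_2] (the subalgebra F_p[ζ_2] maps isomorphically onto ker(Q_0|_R)/im(Q_0|_R)), and the Q_1-Margolis homology of R is T_1(ζ_2, ζ_3, …) (the span of monomials in ζ_2, ζ_3, … with all exponents < p maps isomorphically onto ker(Q_1|_R)/im(Q_1|_R)). -/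
/-- `R = F_p[ζ₂, ζ₃, …] ⊗ Λ(τ̄₃, τ̄₄, …) ⊆ B₂`: the span of the monomials not
involving `ζ₁`. -/
noncomputable def Rsub (p : ℕ) : Submodule (ZMod p) (B p 2) := monSpan p 2 (fun x => x.e 1 = 0)



namespace MargolisAux

lemma Mono.ext' {n : ℕ} {x y : Mono n} (he : x.e = y.e) (ht : x.t = y.t) : x = y := by
  cases x; cases y; simp_all

/-- The set of "non-reduced factor" indices of a monomial. -/
def Dset (p r : ℕ) (x : Mono 2) : Finset ℕ :=
  x.t ∪ (x.e.support.filter (fun k => p ^ r ≤ x.e k ∧ 3 ≤ k + r)).image (fun k => k + r)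

lemma mem_Dset {p r : ℕ} (hp : 0 < p) (hr : r ≤ 1) {x : Mono 2} {m : ℕ} :
    m ∈ Dset p r x ↔ m ∈ x.t ∨ (3 ≤ m ∧ p ^ r ≤ x.e (m - r)) := by
  unfold Dset
  simp only [Finset.mem_union, Finset.mem_image, Finset.mem_filter, Finsupp.mem_support_iff]
  constructor
  · rintro (h | ⟨k, ⟨hk0, hk1, hk2⟩, rfl⟩)
    · exact Or.inl h
    · exact Or.inr ⟨hk2, by simpa using hk1⟩
  · rintro (h | ⟨h3, hq⟩)
    · exact Or.inl h
    · refine Or.inr ⟨m - r, ⟨?_, hq, by omega⟩, by omega⟩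
      have : 0 < p ^ r := pow_pos hp r
      omega

lemma three_le_min' {p r : ℕ} {x : Mono 2} {m₀ : ℕ} (h1 : m₀ ∈ Dset p r x)
    (h2 : m₀ ∉ x.t) : 3 ≤ m₀ := by
  unfold Dset at h1
  rcases Finset.mem_union.1 h1 with h | h
  · exact absurd h h2
  · simp only [Finset.mem_image, Finset.mem_filter] at h
    obtain ⟨k, ⟨_, _, hk⟩, rfl⟩ := h
    exact hk

/-- The contracting homotopy on a basis monomial. -/
noncomputable def hmono (p r : ℕ) (x : Mono 2) : B p 2 :=
  if hD : (Dset p r x).Nonempty then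
    if hm : (Dset p r x).min' hD ∈ x.t then 0
    else Finsupp.single
      ⟨x.e - Finsupp.single ((Dset p r x).min' hD - r) (p ^ r),
       insert ((Dset p r x).min' hD) x.t,
       by simp [Finsupp.tsub_apply, x.he],
       by
         intro m hm'
         rcases Finset.mem_insert.1 hm' with rfl | h
         · exact three_le_min' ((Dset p r x).min'_mem hD) hm
         · exact x.ht m h⟩ 1
  else 0

/-- The contracting homotopy as a linear map. -/
noncomputable def hop (p r : ℕ) : B p 2 →ₗ[ZMod p] B p 2 :=
  Finsupp.lsum (ZMod p) fun x => LinearMap.toSpanSingleton (ZMod p) (B p 2) (hmono p r x)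

/-- Projection onto the reduced monomials. -/
noncomputable def pmap (p r : ℕ) : B p 2 →ₗ[ZMod p] B p 2 :=
  Finsupp.lsum (ZMod p) fun x => LinearMap.toSpanSingleton (ZMod p) (B p 2)
    (if (Dset p r x).Nonempty then 0 else Finsupp.single x 1)

lemma Qop_single (p n r : ℕ) (x : Mono n) :
    Qop p n r (Finsupp.single x 1) = Qmono p r x := by
  simp [Qop, LinearMap.toSpanSingleton_apply]

lemma hop_single (p r : ℕ) (x : Mono 2) :
    hop p r (Finsupp.single x 1) = hmono p r x := by
  simp [hop, LinearMap.toSpanSingleton_apply]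

lemma pmap_single (p r : ℕ) (x : Mono 2) :
    pmap p r (Finsupp.single x 1)
      = if (Dset p r x).Nonempty then 0 else Finsupp.single x 1 := by
  simp [pmap, LinearMap.toSpanSingleton_apply]


lemma min'_eq {s : Finset ℕ} {m₀ : ℕ} (h1 : m₀ ∈ s) (h2 : ∀ m ∈ s, m₀ ≤ m)
    (hne : s.Nonempty) : s.min' hne = m₀ :=
  le_antisymm (Finset.min'_le s m₀ h1) (Finset.le_min' _ hne _ h2)

lemma Qtarget_e (p r : ℕ) {x : Mono 2} {m : ℕ} (hr : r ≤ 1) (hm : m ∈ x.t) :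
    (Qtarget p r x m).e = x.e + Finsupp.single (m - r) (p ^ r) := by
  have : r < m := lt_of_lt_of_le (by omega) (x.ht m hm)
  simp only [Qtarget, if_pos this]

lemma Qtarget_t (p r : ℕ) (x : Mono 2) (m : ℕ) :
    (Qtarget p r x m).t = x.t.erase m := rfl

lemma hmono_eq {p r : ℕ} {y z : Mono 2} {m₀ : ℕ} (h1 : m₀ ∈ Dset p r y)
    (h2 : ∀ m' ∈ Dset p r y, m₀ ≤ m') (h3 : m₀ ∉ y.t)
    (hze : z.e = y.e - Finsupp.single (m₀ - r) (p ^ r)) (hzt : z.t = insert m₀ y.t) :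
    hmono p r y = Finsupp.single z 1 := by
  have hne : (Dset p r y).Nonempty := ⟨m₀, h1⟩
  have hmin : (Dset p r y).min' hne = m₀ := min'_eq h1 h2 hne
  unfold hmono
  rw [dif_pos hne]
  simp only [hmin]
  rw [dif_neg h3]
  congr 1
  exact Mono.ext' hze.symm hzt.symm

lemma hmono_eq_zero {p r : ℕ} {y : Mono 2} {m₀ : ℕ} (h1 : m₀ ∈ Dset p r y)
    (h2 : ∀ m' ∈ Dset p r y, m₀ ≤ m') (h3 : m₀ ∈ y.t) :
    hmono p r y = 0 := by
  have hne : (Dset p r y).Nonempty := ⟨m₀, h1⟩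
  have hmin : (Dset p r y).min' hne = m₀ := min'_eq h1 h2 hne
  unfold hmono
  rw [dif_pos hne]
  simp only [hmin]
  rw [dif_pos h3]

lemma Dset_Qtarget_le {p r : ℕ} (hp : 0 < p) (hr : r ≤ 1) {x : Mono 2} {m : ℕ}
    (hm : m ∈ x.t) {m₀ : ℕ} (h2 : ∀ m' ∈ Dset p r x, m₀ ≤ m') (hm₀m : m₀ ≤ m) :
    ∀ m' ∈ Dset p r (Qtarget p r x m), m₀ ≤ m' := by
  intro m' h'
  rw [mem_Dset hp hr] at h'
  rcases h' with h' | ⟨h3, hq⟩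
  · rw [Qtarget_t] at h'
    exact h2 m' ((mem_Dset hp hr).2 (Or.inl (Finset.mem_of_mem_erase h')))
  · by_cases hcase : m' = m
    · omega
    · have h3m : 3 ≤ m := x.ht m hm
      rw [Qtarget_e p r hr hm] at hq
      rw [Finsupp.add_apply, Finsupp.single_apply, if_neg (by omega : ¬ m - r = m' - r)] at hq
      exact h2 m' ((mem_Dset hp hr).2 (Or.inr ⟨h3, by omega⟩))

theorem homotopy (p r : ℕ) (hp : 0 < p) (hr : r ≤ 1) (x : Mono 2) :
    Qop p 2 r (hmono p r x) + hop p r (Qmono p r x)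
      = Finsupp.single x 1 - pmap p r (Finsupp.single x 1) := by
  by_cases hD : (Dset p r x).Nonempty
  · rw [pmap_single, if_pos hD]
    set m₀ := (Dset p r x).min' hD with hm₀def
    have hm₀mem : m₀ ∈ Dset p r x := (Dset p r x).min'_mem hD
    have hm₀min : ∀ m' ∈ Dset p r x, m₀ ≤ m' := fun m' h' => Finset.min'_le _ _ h'
    have ht_ge : ∀ m ∈ x.t, m₀ ≤ m := fun m hm =>
      hm₀min m ((mem_Dset hp hr).2 (Or.inl hm))
    have hQh : hop p r (Qmono p r x)
        = ∑ m ∈ x.t, ((-1 : ZMod p) ^ ((x.t.filter (fun m' => m' < m)).card)) •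
            hmono p r (Qtarget p r x m) := by
      rw [Qmono, map_sum]
      exact Finset.sum_congr rfl fun m _ => by rw [map_smul, hop_single]
    by_cases hm₀t : m₀ ∈ x.t
    · -- Case A : the minimal non-reduced factor carries a τ
      have hmx : hmono p r x = 0 := by
        unfold hmono; rw [dif_pos hD, dif_pos hm₀t]
      rw [hmx, map_zero, zero_add, sub_zero]
      rw [hQh]
      rw [Finset.sum_eq_single m₀ (fun m hm hne => ?_) (fun h => absurd hm₀t h)]
      · have h3m₀ : 3 ≤ m₀ := x.ht m₀ hm₀t
        have hfilter : x.t.filter (fun m' => m' < m₀) = ∅ :=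
          Finset.filter_eq_empty_iff.2 (fun m hm => by have := ht_ge m hm; omega)
        have hmm : hmono p r (Qtarget p r x m₀) = Finsupp.single x 1 := by
          refine hmono_eq ((mem_Dset hp hr).2 (Or.inr ⟨h3m₀, ?_⟩))
            (Dset_Qtarget_le hp hr hm₀t hm₀min le_rfl) (Finset.notMem_erase m₀ x.t) ?_ ?_
          · rw [Qtarget_e p r hr hm₀t, Finsupp.add_apply, Finsupp.single_apply, if_pos rfl]
            omega
          · rw [Qtarget_e p r hr hm₀t, add_tsub_cancel_right]
          · rw [Qtarget_t, Finset.insert_erase hm₀t]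
        rw [hmm, hfilter]
        simp
      · have hmm : hmono p r (Qtarget p r x m) = 0 := by
          refine hmono_eq_zero ((mem_Dset hp hr).2 (Or.inl ?_))
            (Dset_Qtarget_le hp hr hm hm₀min (ht_ge m hm)) ?_
          · exact Finset.mem_erase.2 ⟨fun h => hne h.symm, hm₀t⟩
          · exact Finset.mem_erase.2 ⟨fun h => hne h.symm, hm₀t⟩
        rw [hmm, smul_zero]
    · -- Case B : the minimal non-reduced factor is a ζ-power
      have h3q : 3 ≤ m₀ ∧ p ^ r ≤ x.e (m₀ - r) := by
        rcases (mem_Dset hp hr).1 hm₀mem with h | h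
        · exact absurd h hm₀t
        · exact h
      obtain ⟨h3m₀, hqm₀⟩ := h3q
      have hsle : Finsupp.single (m₀ - r) (p ^ r) ≤ x.e := Finsupp.single_le_iff.2 hqm₀
      have ht_gt : ∀ m ∈ x.t, m₀ < m := fun m hm =>
        lt_of_le_of_ne (ht_ge m hm) (fun h => hm₀t (h ▸ hm))
      set x' : Mono 2 :=
        ⟨x.e - Finsupp.single (m₀ - r) (p ^ r), insert m₀ x.t,
         by simp [Finsupp.tsub_apply, x.he],
         by
           intro m hm'
           rcases Finset.mem_insert.1 hm' with rfl | h
           · exact h3m₀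
           · exact x.ht m h⟩ with hx'def
      have hmx : hmono p r x = Finsupp.single x' 1 :=
        hmono_eq hm₀mem hm₀min hm₀t rfl rfl
      have hx't : x'.t = insert m₀ x.t := rfl
      have hx'e : x'.e = x.e - Finsupp.single (m₀ - r) (p ^ r) := rfl
      have hQx' : Qmono p r x' = Finsupp.single x 1 +
          ∑ m ∈ x.t, (-((-1 : ZMod p) ^ ((x.t.filter (fun m' => m' < m)).card))) •
            Finsupp.single (Qtarget p r x' m) (1 : ZMod p) := by
        rw [Qmono, hx't, Finset.sum_insert hm₀t]
        congr 1
        · have hfilter : (insert m₀ x.t).filter (fun m' => m' < m₀) = ∅ :=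
            Finset.filter_eq_empty_iff.2 (fun m hm => by
              rcases Finset.mem_insert.1 hm with rfl | h
              · omega
              · have := ht_gt m h; omega)
          have hx : Qtarget p r x' m₀ = x := by
            refine Mono.ext' ?_ ?_
            · rw [Qtarget_e p r hr (Finset.mem_insert_self m₀ x.t), hx'e,
                tsub_add_cancel_of_le hsle]
            · rw [Qtarget_t, hx't, Finset.erase_insert hm₀t]
          rw [hfilter, hx]
          simp
        · refine Finset.sum_congr rfl fun m hm => ?_
          have hlt := ht_gt m hm
          have hfil : (insert m₀ x.t).filter (fun m' => m' < m)
              = insert m₀ (x.t.filter (fun m' => m' < m)) := by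
            rw [Finset.filter_insert, if_pos hlt]
          rw [hfil, Finset.card_insert_of_notMem (fun h => hm₀t (Finset.mem_of_mem_filter m₀ h)),
            pow_succ]
          congr 1
          ring
      have hcomp : ∀ m ∈ x.t, hmono p r (Qtarget p r x m)
          = Finsupp.single (Qtarget p r x' m) (1 : ZMod p) := by
        intro m hm
        have hlt := ht_gt m hm
        have h3m : 3 ≤ m := x.ht m hm
        refine hmono_eq ((mem_Dset hp hr).2 (Or.inr ⟨h3m₀, ?_⟩))
          (Dset_Qtarget_le hp hr hm hm₀min (le_of_lt hlt))
          (fun h => hm₀t (Finset.mem_of_mem_erase h)) ?_ ?_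
        · rw [Qtarget_e p r hr hm, Finsupp.add_apply, Finsupp.single_apply,
            if_neg (by omega : ¬ m - r = m₀ - r)]
          simpa using hqm₀
        · rw [Qtarget_e p r hr (Finset.mem_insert_of_mem hm), hx'e,
            Qtarget_e p r hr hm, tsub_add_eq_add_tsub hsle]
        · rw [Qtarget_t, Qtarget_t, hx't, Finset.erase_insert_of_ne (by omega : m₀ ≠ m)]
      have hQh2 : hop p r (Qmono p r x)
          = ∑ m ∈ x.t, ((-1 : ZMod p) ^ ((x.t.filter (fun m' => m' < m)).card)) •
              Finsupp.single (Qtarget p r x' m) (1 : ZMod p) := by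
        rw [hQh]
        exact Finset.sum_congr rfl fun m hm => by rw [hcomp m hm]
      rw [hmx, Qop_single, hQx', hQh2, add_assoc, ← Finset.sum_add_distrib]
      rw [Finset.sum_eq_zero (fun m _ => by rw [← add_smul, neg_add_cancel, zero_smul]), add_zero,
        sub_zero]
  · have ht : x.t = ∅ := by
      rw [Finset.not_nonempty_iff_eq_empty] at hD
      rw [← Finset.subset_empty, ← hD]
      intro m hm
      exact (mem_Dset hp hr).2 (Or.inl hm)
    have hmx : hmono p r x = 0 := by unfold hmono; rw [dif_neg hD]
    rw [pmap_single, if_neg hD, hmx, map_zero, Qmono, ht, Finset.sum_empty, map_zero,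
      add_zero, sub_self]


lemma Qop_apply (p n r : ℕ) (v : B p n) :
    Qop p n r v = v.sum fun y c => c • Qmono p r y := by
  rw [Qop, Finsupp.lsum_apply]
  exact Finsupp.sum_congr fun y _ => rfl

lemma hop_apply (p r : ℕ) (v : B p 2) :
    hop p r v = v.sum fun y c => c • hmono p r y := by
  rw [hop, Finsupp.lsum_apply]
  exact Finsupp.sum_congr fun y _ => rfl

lemma pmap_apply (p r : ℕ) (v : B p 2) :
    pmap p r v = v.sum fun y c =>
      c • (if (Dset p r y).Nonempty then 0 else Finsupp.single y 1) := by
  rw [pmap, Finsupp.lsum_apply]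
  exact Finsupp.sum_congr fun y _ => rfl

lemma Rsub_eq (p : ℕ) :
    Rsub p = Finsupp.supported (ZMod p) (ZMod p) {x : Mono 2 | x.e 1 = 0} := by
  rw [Rsub, monSpan]
  exact (Finsupp.supported_eq_span_single _ _).symm

lemma monSpan_eq (p n : ℕ) (P : Mono n → Prop) :
    monSpan p n P = Finsupp.supported (ZMod p) (ZMod p) {x : Mono n | P x} := by
  rw [monSpan]
  exact (Finsupp.supported_eq_span_single _ _).symm

lemma Qmono_mem (p r : ℕ) (hr : r ≤ 1) {y : Mono 2} (hy : y.e 1 = 0) :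
    Qmono p r y ∈ Finsupp.supported (ZMod p) (ZMod p) {x : Mono 2 | x.e 1 = 0} := by
  rw [Qmono]
  refine Submodule.sum_mem _ fun m hm => Submodule.smul_mem _ _ ?_
  refine Finsupp.single_mem_supported _ _ ?_
  have h3m : 3 ≤ m := y.ht m hm
  show (Qtarget p r y m).e 1 = 0
  rw [Qtarget_e p r hr hm, Finsupp.add_apply, hy, Finsupp.single_apply,
    if_neg (by omega : ¬ m - r = 1)]
  simp

lemma hmono_mem (p r : ℕ) {y : Mono 2} (hy : y.e 1 = 0) :
    hmono p r y ∈ Finsupp.supported (ZMod p) (ZMod p) {x : Mono 2 | x.e 1 = 0} := by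
  unfold hmono
  by_cases hD : (Dset p r y).Nonempty
  · rw [dif_pos hD]
    by_cases hm : (Dset p r y).min' hD ∈ y.t
    · rw [dif_pos hm]; exact Submodule.zero_mem _
    · rw [dif_neg hm]
      refine Finsupp.single_mem_supported _ _ ?_
      show (y.e - Finsupp.single ((Dset p r y).min' hD - r) (p ^ r)) 1 = 0
      rw [Finsupp.tsub_apply, hy]
      simp
  · rw [dif_neg hD]; exact Submodule.zero_mem _

lemma Qop_stab (p r : ℕ) (hr : r ≤ 1) {v : B p 2} (hv : v ∈ Rsub p) :
    Qop p 2 r v ∈ Rsub p := by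
  rw [Rsub_eq] at hv ⊢
  rw [Qop_apply]
  exact Submodule.sum_mem _ fun y hy =>
    Submodule.smul_mem _ _ (Qmono_mem p r hr ((Finsupp.mem_supported _ _).1 hv hy))

lemma hop_stab (p r : ℕ) {v : B p 2} (hv : v ∈ Rsub p) :
    hop p r v ∈ Rsub p := by
  rw [Rsub_eq] at hv ⊢
  rw [hop_apply]
  exact Submodule.sum_mem _ fun y hy =>
    Submodule.smul_mem _ _ (hmono_mem p r ((Finsupp.mem_supported _ _).1 hv hy))

lemma Qop_apply_red (p r : ℕ) (hr : r ≤ 1) (w : B p 2) (z : Mono 2)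
    (Hz : ∀ m, 3 ≤ m → z.e (m - r) < p ^ r) : Qop p 2 r w z = 0 := by
  rw [Qop_apply, Finsupp.sum_apply, Finsupp.sum]
  refine Finset.sum_eq_zero fun y _ => ?_
  rw [Finsupp.smul_apply]
  have : Qmono p r y z = 0 := by
    rw [Qmono, Finset.sum_apply']
    refine Finset.sum_eq_zero fun m hm => ?_
    rw [Finsupp.smul_apply, Finsupp.single_eq_of_ne, smul_zero]
    intro h
    have h3m : 3 ≤ m := y.ht m hm
    have he := congrArg (fun u : Mono 2 => u.e (m - r)) h
    simp only [Qtarget_e p r hr hm, Finsupp.add_apply, Finsupp.single_eq_same] at he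
    have := Hz m h3m
    omega
  rw [this, smul_zero]

lemma homotopy_all (p r : ℕ) (hp : 0 < p) (hr : r ≤ 1) (v : B p 2) :
    Qop p 2 r (hop p r v) + hop p r (Qop p 2 r v) = v - pmap p r v := by
  induction v using Finsupp.induction_linear with
  | zero => simp
  | add f g hf hg =>
    simp only [map_add]
    rw [add_add_add_comm, hf, hg, sub_add_sub_comm]
  | single x b =>
    have hb : (Finsupp.single x b : B p 2) = b • Finsupp.single x 1 := by
      rw [Finsupp.smul_single, smul_eq_mul, mul_one]
    rw [hb, map_smul, map_smul, map_smul, map_smul, map_smul, ← smul_add,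
      hop_single, Qop_single, homotopy p r hp hr x, smul_sub]

lemma main_r (p r : ℕ) (hp : 0 < p) (hr : r ≤ 1) (Red : Mono 2 → Prop)
    (hred1 : ∀ x : Mono 2, Red x → x.t = ∅ ∧ x.e 1 = 0)
    (hred2 : ∀ x : Mono 2, Red x → ∀ m, 3 ≤ m → x.e (m - r) < p ^ r)
    (hred3 : ∀ x : Mono 2, x.e 1 = 0 → ¬(Dset p r x).Nonempty → Red x) :
    monSpan p 2 Red ≤ Rsub p ⊓ LinearMap.ker (Qop p 2 r) ∧
    monSpan p 2 Red ⊓ Submodule.map (Qop p 2 r) (Rsub p) = ⊥ ∧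
    Rsub p ⊓ LinearMap.ker (Qop p 2 r) ≤
      monSpan p 2 Red ⊔ Submodule.map (Qop p 2 r) (Rsub p) := by
  refine ⟨?_, ?_, ?_⟩
  · rw [monSpan]
    refine Submodule.span_le.2 ?_
    rintro _ ⟨x, hx, rfl⟩
    refine ⟨?_, ?_⟩
    · rw [Rsub_eq]
      exact Finsupp.single_mem_supported _ _ (hred1 x hx).2
    · rw [SetLike.mem_coe, LinearMap.mem_ker, Qop_single, Qmono, (hred1 x hx).1,
        Finset.sum_empty]
  · rw [Submodule.eq_bot_iff]
    rintro v ⟨hv1, w, _, hww⟩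
    rw [monSpan_eq] at hv1
    refine Finsupp.ext fun z => ?_
    show v z = 0
    by_cases hz : Red z
    · rw [← hww]
      exact Qop_apply_red p r hr w z (hred2 z hz)
    · exact Finsupp.notMem_support_iff.1
        (fun h => hz ((Finsupp.mem_supported _ _).1 hv1 h))
  · rintro v ⟨hv1, hv2⟩
    rw [SetLike.mem_coe, LinearMap.mem_ker] at hv2
    have H := homotopy_all p r hp hr v
    rw [hv2, map_zero, add_zero] at H
    have hv : v = pmap p r v + Qop p 2 r (hop p r v) := by rw [H]; abel
    rw [hv]
    refine Submodule.add_mem_sup ?_ (Submodule.mem_map_of_mem (hop_stab p r hv1))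
    rw [monSpan_eq, pmap_apply]
    refine Submodule.sum_mem _ fun y hy => Submodule.smul_mem _ _ ?_
    have hy1 : y.e 1 = 0 := by
      rw [Rsub_eq] at hv1
      exact (Finsupp.mem_supported _ _).1 hv1 hy
    by_cases hD : (Dset p r y).Nonempty
    · rw [if_pos hD]; exact Submodule.zero_mem _
    · rw [if_neg hD]
      exact Finsupp.single_mem_supported _ _ (hred3 y hy1 hD)

end MargolisAux


/-- `R` is stable under `Q₀` and `Q₁`; its `Q₀`-Margolis homology is
`F_p[ζ₂]` (the span of the powers `ζ₂^k` maps isomorphically onto `ker(Q₀|_R)/im(Q₀|_R)`),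
and its `Q₁`-Margolis homology is `T₁(ζ₂, ζ₃, …)` (the span of the monomials in
`ζ₂, ζ₃, …` with all exponents `< p` maps isomorphically onto `ker(Q₁|_R)/im(Q₁|_R)`). -/
theorem margolis_homology_of_R (p : ℕ) (hp : p.Prime) (hodd : Odd p) :
    (∀ r ≤ 1, ∀ x ∈ Rsub p, Qop p 2 r x ∈ Rsub p) ∧
    (monSpan p 2 (fun x => x.t = ∅ ∧ ∀ k, k ≠ 2 → x.e k = 0) ≤
        Rsub p ⊓ LinearMap.ker (Qop p 2 0) ∧
      monSpan p 2 (fun x => x.t = ∅ ∧ ∀ k, k ≠ 2 → x.e k = 0) ⊓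
        Submodule.map (Qop p 2 0) (Rsub p) = ⊥ ∧
      Rsub p ⊓ LinearMap.ker (Qop p 2 0) ≤
        monSpan p 2 (fun x => x.t = ∅ ∧ ∀ k, k ≠ 2 → x.e k = 0) ⊔
          Submodule.map (Qop p 2 0) (Rsub p)) ∧
    (monSpan p 2 (fun x => x.t = ∅ ∧ x.e 1 = 0 ∧ ∀ k, x.e k < p) ≤
        Rsub p ⊓ LinearMap.ker (Qop p 2 1) ∧
      monSpan p 2 (fun x => x.t = ∅ ∧ x.e 1 = 0 ∧ ∀ k, x.e k < p) ⊓
        Submodule.map (Qop p 2 1) (Rsub p) = ⊥ ∧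
      Rsub p ⊓ LinearMap.ker (Qop p 2 1) ≤
        monSpan p 2 (fun x => x.t = ∅ ∧ x.e 1 = 0 ∧ ∀ k, x.e k < p) ⊔
          Submodule.map (Qop p 2 1) (Rsub p)) := by

  have hp0 : 0 < p := hp.pos
  refine ⟨fun r hr v hv => MargolisAux.Qop_stab p r hr hv, ?_, ?_⟩
  · refine MargolisAux.main_r p 0 hp0 (by omega) _ ?_ ?_ ?_
    · exact fun x hx => ⟨hx.1, hx.2 1 (by omega)⟩
    · intro x hx m hm
      have : x.e m = 0 := hx.2 m (by omega)
      simpa [this] using Nat.one_pos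
    · intro x hx1 hD
      rw [Finset.not_nonempty_iff_eq_empty] at hD
      constructor
      · rw [← Finset.subset_empty, ← hD]
        intro m hm
        exact (MargolisAux.mem_Dset hp0 (by omega)).2 (Or.inl hm)
      · intro k hk
        by_contra hne
        rcases Nat.lt_or_ge k 3 with h | h
        · interval_cases k
          · exact hne x.he
          · exact hne hx1
          · exact hk rfl
        · have hmem : k ∈ MargolisAux.Dset p 0 x :=
            (MargolisAux.mem_Dset hp0 (by omega)).2
              (Or.inr ⟨by omega, by simpa using Nat.one_le_iff_ne_zero.2 hne⟩)
          rw [hD] at hmem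
          exact absurd hmem (Finset.notMem_empty k)
  · refine MargolisAux.main_r p 1 hp0 le_rfl _ ?_ ?_ ?_
    · exact fun x hx => ⟨hx.1, hx.2.1⟩
    · intro x hx m hm
      simpa using hx.2.2 (m - 1)
    · intro x hx1 hD
      rw [Finset.not_nonempty_iff_eq_empty] at hD
      refine ⟨?_, hx1, ?_⟩
      · rw [← Finset.subset_empty, ← hD]
        intro m hm
        exact (MargolisAux.mem_Dset hp0 le_rfl).2 (Or.inl hm)
      · intro k
        by_contra hcon
        push_neg at hcon
        rcases Nat.lt_or_ge k 2 with h | h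
        · interval_cases k
          · rw [x.he] at hcon; omega
          · rw [hx1] at hcon; omega
        · have hmem : k + 1 ∈ MargolisAux.Dset p 1 x :=
            (MargolisAux.mem_Dset hp0 le_rfl).2
              (Or.inr ⟨by omega, by simpa using hcon⟩)
          rw [hD] at hmem
          exact absurd hmem (Finset.notMem_empty _)
end
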